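/- Let G be a non-abelian τ₂-group such that every ring of scalars of G is isomorphic, as a ring, to ℤ. Then G cannot be decomposed as a direct product of non-abelian subgroups: G is not isomorphic to H × K for any two non-abelian groups H and K. -/

import Mathlib

open scoped commutatorElement

noncomputable def grpRank (G : Type*) [Group G] : ℕ :=
  sInf {k : ℕ | ∃ S : Finset G, S.card = k ∧ Subgroup.closure (S : Set G) = ⊤}

def IsTau2 (G : Type*) [Group G] : Prop :=
  Group.FG G ∧ (∀ g : G, g ≠ 1 → ¬IsOfFinOrder g) ∧ ∀ g h : G, ⁅g, h⁆ ∈ Subgroup.center G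

def prodPow {G : Type*} [Group G] {k : ℕ} (v : Fin k → G) (e : Fin k → ℤ) : G :=
  (List.ofFn fun i => v i ^ e i).prod

def tau2Rels (n m : ℕ) (lam : Fin m → Fin n → Fin n → ℤ) :
    Set (FreeGroup (Fin n ⊕ Fin m)) :=
  {r | (∃ i j : Fin n, i < j ∧
          r = ⁅(FreeGroup.of (Sum.inl i) : FreeGroup (Fin n ⊕ Fin m)),
              FreeGroup.of (Sum.inl j)⁆ *
              (prodPow (fun t : Fin m => FreeGroup.of (Sum.inr t)) (fun t => lam t i j))⁻¹) ∨
       (∃ (i : Fin n) (t : Fin m), r = ⁅(FreeGroup.of (Sum.inl i) : FreeGroup (Fin n ⊕ Fin m)),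
              FreeGroup.of (Sum.inr t)⁆) ∨
       (∃ t s : Fin m, r = ⁅(FreeGroup.of (Sum.inr t) : FreeGroup (Fin n ⊕ Fin m)),
              FreeGroup.of (Sum.inr s)⁆)}

def Tau2Group (n m : ℕ) (lam : Fin m → Fin n → Fin n → ℤ) : Type :=
  PresentedGroup (tau2Rels n m lam)

instance (n m : ℕ) (lam : Fin m → Fin n → Fin n → ℤ) : Group (Tau2Group n m lam) :=
  inferInstanceAs (Group (PresentedGroup (tau2Rels n m lam)))

def tau2a {n m : ℕ} {lam : Fin m → Fin n → Fin n → ℤ} (i : Fin n) : Tau2Group n m lam :=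
  PresentedGroup.of (Sum.inl i)

def tau2c {n m : ℕ} {lam : Fin m → Fin n → Fin n → ℤ} (t : Fin m) : Tau2Group n m lam :=
  PresentedGroup.of (Sum.inr t)

def IsCSmall {G : Type*} [Group G] (g : G) : Prop :=
  ∀ x : G, x ∈ Subgroup.centralizer {g} ↔
    ∃ (t : ℤ) (z : G), z ∈ Subgroup.center G ∧ x = g ^ t * z

def IsMalcevBasis {G : Type*} [Group G] {n m : ℕ} (a : Fin n → G) (c : Fin m → G) : Prop :=
  (∀ t, c t ∈ Subgroup.center G) ∧
  (commutator G ≤ Subgroup.closure (Set.range c)) ∧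
  (∀ g : G, ∃! p : (Fin n → ℤ) × (Fin m → ℤ), g = prodPow a p.1 * prodPow c p.2)

lemma mem_commutator_self {G : Type*} [Group G] (g h : G) : ⁅g, h⁆ ∈ commutator G := by
  rw [commutator_def]
  exact Subgroup.commutator_mem_commutator (Subgroup.mem_top g) (Subgroup.mem_top h)

/-- A ring of scalars of a τ₂-group G: a commutative ring R acting faithfully by
(additive, i.e. multiplicative in the group notation) endomorphisms on the abelian
groups G/Z(G) and G', compatibly with the bilinear map induced by the commutator:
f(r·x, y) = f(x, r·y) = r·f(x, y). -/
structure RingOfScalarsOn (R : Type*) (G : Type*) [CommRing R] [Group G] where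
  actQ : R → (G ⧸ Subgroup.center G) → (G ⧸ Subgroup.center G)
  actN : R → ↥(commutator G) → ↥(commutator G)
  actQ_map_mul : ∀ r x y, actQ r (x * y) = actQ r x * actQ r y
  actN_map_mul : ∀ r x y, actN r (x * y) = actN r x * actN r y
  actQ_one : ∀ x, actQ 1 x = x
  actN_one : ∀ x, actN 1 x = x
  actQ_add : ∀ r s x, actQ (r + s) x = actQ r x * actQ s x
  actN_add : ∀ r s x, actN (r + s) x = actN r x * actN s x
  actQ_mul : ∀ r s x, actQ (r * s) x = actQ r (actQ s x)
  actN_mul : ∀ r s x, actN (r * s) x = actN r (actN s x)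
  actQ_faithful : ∀ r s : R, (∀ x, actQ r x = actQ s x) → r = s
  actN_faithful : ∀ r s : R, (∀ x, actN r x = actN s x) → r = s
  compat_left : ∀ (r : R) (g h g' : G),
    (QuotientGroup.mk g' : G ⧸ Subgroup.center G) = actQ r (QuotientGroup.mk g) →
    actN r ⟨⁅g, h⁆, mem_commutator_self g h⟩ = ⟨⁅g', h⁆, mem_commutator_self g' h⟩
  compat_right : ∀ (r : R) (g h h' : G),
    (QuotientGroup.mk h' : G ⧸ Subgroup.center G) = actQ r (QuotientGroup.mk h) →
    actN r ⟨⁅g, h⁆, mem_commutator_self g h⟩ = ⟨⁅g, h'⁆, mem_commutator_self g h'⟩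

section ClassTwo

variable {G : Type*} [Group G]

lemma central_conj' (a z : G) (hz : z ∈ Subgroup.center G) : a * z * a⁻¹ = z := by
  rw [Subgroup.mem_center_iff.mp hz a]; group

lemma comm_mul_left' (hc : ∀ g h : G, ⁅g, h⁆ ∈ Subgroup.center G) (a b c : G) :
    ⁅a * b, c⁆ = ⁅a, c⁆ * ⁅b, c⁆ := by
  have h1 : ⁅a * b, c⁆ = a * ⁅b, c⁆ * a⁻¹ * ⁅a, c⁆ := by
    simp only [commutatorElement_def]; group
  rw [h1, central_conj' a _ (hc b c), ← Subgroup.mem_center_iff.mp (hc b c) ⁅a, c⁆]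

lemma comm_mul_right' (hc : ∀ g h : G, ⁅g, h⁆ ∈ Subgroup.center G) (a b c : G) :
    ⁅a, b * c⁆ = ⁅a, b⁆ * ⁅a, c⁆ := by
  have h1 : ⁅a, b * c⁆ = ⁅a, b⁆ * (b * ⁅a, c⁆ * b⁻¹) := by
    simp only [commutatorElement_def]; group
  rw [h1, central_conj' b _ (hc a c)]

lemma comm_inv_left' (hc : ∀ g h : G, ⁅g, h⁆ ∈ Subgroup.center G) (a c : G) :
    ⁅a⁻¹, c⁆ = ⁅a, c⁆⁻¹ := by
  have := comm_mul_left' hc a a⁻¹ c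
  rw [mul_inv_cancel, commutatorElement_one_left] at this
  exact eq_inv_of_mul_eq_one_right this.symm

lemma comm_inv_right' (hc : ∀ g h : G, ⁅g, h⁆ ∈ Subgroup.center G) (a c : G) :
    ⁅a, c⁻¹⁆ = ⁅a, c⁆⁻¹ := by
  have := comm_mul_right' hc a c c⁻¹
  rw [mul_inv_cancel, commutatorElement_one_right] at this
  exact eq_inv_of_mul_eq_one_right this.symm

lemma comm_zpow_left' (hc : ∀ g h : G, ⁅g, h⁆ ∈ Subgroup.center G) (a c : G) (n : ℤ) :
    ⁅a ^ n, c⁆ = ⁅a, c⁆ ^ n := by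
  induction n using Int.induction_on with
  | zero => simp
  | succ k ih => rw [zpow_add_one, comm_mul_left' hc, ih, zpow_add_one]
  | pred k ih => rw [zpow_sub_one, comm_mul_left' hc, ih, comm_inv_left' hc, zpow_sub_one]

lemma comm_zpow_right' (hc : ∀ g h : G, ⁅g, h⁆ ∈ Subgroup.center G) (a c : G) (n : ℤ) :
    ⁅a, c ^ n⁆ = ⁅a, c⁆ ^ n := by
  induction n using Int.induction_on with
  | zero => simp
  | succ k ih => rw [zpow_add_one, comm_mul_right' hc, ih, zpow_add_one]
  | pred k ih => rw [zpow_sub_one, comm_mul_right' hc, ih, comm_inv_right' hc, zpow_sub_one]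

lemma tf_zpow_eq' (hTF : ∀ g : G, g ≠ 1 → ¬IsOfFinOrder g) {x : G} (hx : x ≠ 1) {a b : ℤ}
    (h : x ^ a = x ^ b) : a = b := by
  by_contra hne
  refine hTF x hx (isOfFinOrder_iff_zpow_eq_one.mpr ⟨a - b, sub_ne_zero.mpr hne, ?_⟩)
  rw [zpow_sub, h, mul_inv_cancel]

/-- If g^n is central, and g fails to commute with someone, then n = 0. -/
lemma central_zpow_imp_zero' (hc : ∀ g h : G, ⁅g, h⁆ ∈ Subgroup.center G)
    (hTF : ∀ g : G, g ≠ 1 → ¬IsOfFinOrder g) {g h : G} (hgh : ⁅g, h⁆ ≠ 1) {n : ℤ}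
    (hn : g ^ n ∈ Subgroup.center G) : n = 0 := by
  have h1 : ⁅g ^ n, h⁆ = 1 :=
    commutatorElement_eq_one_iff_commute.mpr ((Subgroup.mem_center_iff.mp hn h).symm)
  rw [comm_zpow_left' hc] at h1
  have := tf_zpow_eq' hTF hgh (a := n) (b := 0) (by simpa using h1)
  exact this

lemma hom_commutator_mem' (f : G →* G) {g : G} (hg : g ∈ commutator G) :
    f g ∈ commutator G := by
  have hle : (commutator G).map f ≤ commutator G := by
    rw [commutator_def, Subgroup.map_commutator]
    exact Subgroup.commutator_mono le_top le_top
  exact hle ⟨g, hg, rfl⟩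

end ClassTwo

section Dec

variable {G H K : Type*} [Group G] [Group H] [Group K]

def piH (e : G ≃* H × K) : G →* G :=
  (e.symm.toMonoidHom).comp ((MonoidHom.inl H K).comp ((MonoidHom.fst H K).comp e.toMonoidHom))

def piK (e : G ≃* H × K) : G →* G :=
  (e.symm.toMonoidHom).comp ((MonoidHom.inr H K).comp ((MonoidHom.snd H K).comp e.toMonoidHom))

lemma piH_apply (e : G ≃* H × K) (g : G) : piH e g = e.symm ((e g).1, 1) := rfl

lemma piK_apply (e : G ≃* H × K) (g : G) : piK e g = e.symm (1, (e g).2) := rfl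

lemma piH_mul_piK (e : G ≃* H × K) (g : G) : piH e g * piK e g = g := by
  apply e.injective
  rw [map_mul, piH_apply, piK_apply, e.apply_symm_apply, e.apply_symm_apply]
  simp [Prod.ext_iff]

lemma piH_piK_commute (e : G ≃* H × K) (a b : G) : piH e a * piK e b = piK e b * piH e a := by
  apply e.injective
  rw [map_mul, map_mul, piH_apply, piK_apply, e.apply_symm_apply, e.apply_symm_apply]
  simp [Prod.ext_iff]

lemma piH_piH (e : G ≃* H × K) (g : G) : piH e (piH e g) = piH e g := by
  simp [piH_apply, e.apply_symm_apply]

lemma piK_piK (e : G ≃* H × K) (g : G) : piK e (piK e g) = piK e g := by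
  simp [piK_apply, e.apply_symm_apply]

lemma piH_piK' (e : G ≃* H × K) (g : G) : piH e (piK e g) = 1 := by
  simp [piH_apply, piK_apply, e.apply_symm_apply]

lemma piK_piH' (e : G ≃* H × K) (g : G) : piK e (piH e g) = 1 := by
  simp [piH_apply, piK_apply, e.apply_symm_apply]

lemma piH_center (e : G ≃* H × K) {g : G} (hg : g ∈ Subgroup.center G) :
    piH e g ∈ Subgroup.center G := by
  rw [Subgroup.mem_center_iff]
  intro x
  have key : ∀ y : G, y * g = g * y := Subgroup.mem_center_iff.mp hg
  have h1 : e g * ((e x).1, 1) = ((e x).1, 1) * e g := by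
    have := congrArg e (key (e.symm ((e x).1, 1)))
    simpa [map_mul, e.apply_symm_apply] using this.symm
  apply e.injective
  rw [map_mul, map_mul, piH_apply, e.apply_symm_apply]
  have h1' := (Prod.ext_iff.mp h1).1
  simp only [Prod.fst_mul, Prod.snd_mul, Prod.fst_mul, Prod.snd_mul, Prod.mk_mul_mk, mul_one, one_mul] at h1'
  simp [Prod.ext_iff, h1'.symm]

lemma piK_center (e : G ≃* H × K) {g : G} (hg : g ∈ Subgroup.center G) :
    piK e g ∈ Subgroup.center G := by
  rw [Subgroup.mem_center_iff]
  intro x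
  have key : ∀ y : G, y * g = g * y := Subgroup.mem_center_iff.mp hg
  have h1 : e g * (1, (e x).2) = (1, (e x).2) * e g := by
    have := congrArg e (key (e.symm (1, (e x).2)))
    simpa [map_mul, e.apply_symm_apply] using this.symm
  apply e.injective
  rw [map_mul, map_mul, piK_apply, e.apply_symm_apply]
  have h1' := (Prod.ext_iff.mp h1).2
  simp only [Prod.fst_mul, Prod.snd_mul, Prod.fst_mul, Prod.snd_mul, Prod.mk_mul_mk, mul_one, one_mul] at h1'
  simp [Prod.ext_iff, h1'.symm]

end Dec
section CommHelp

variable {G H K : Type*} [Group G] [Group H] [Group K]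

lemma comm_piH_left (hc : ∀ g h : G, ⁅g, h⁆ ∈ Subgroup.center G) (e : G ≃* H × K) (a b : G) :
    ⁅piH e a, b⁆ = ⁅piH e a, piH e b⁆ := by
  conv_lhs => rw [← piH_mul_piK e b]
  rw [comm_mul_right' hc,
    commutatorElement_eq_one_iff_commute.mpr (piH_piK_commute e a b), mul_one]

lemma comm_piK_left (hc : ∀ g h : G, ⁅g, h⁆ ∈ Subgroup.center G) (e : G ≃* H × K) (a b : G) :
    ⁅piK e a, b⁆ = ⁅piK e a, piK e b⁆ := by
  conv_lhs => rw [← piH_mul_piK e b]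
  rw [comm_mul_right' hc,
    commutatorElement_eq_one_iff_commute.mpr ((piH_piK_commute e b a).symm), one_mul]

lemma comm_piH_right (hc : ∀ g h : G, ⁅g, h⁆ ∈ Subgroup.center G) (e : G ≃* H × K) (a b : G) :
    ⁅a, piH e b⁆ = ⁅piH e a, piH e b⁆ := by
  conv_lhs => rw [← piH_mul_piK e a]
  rw [comm_mul_left' hc,
    commutatorElement_eq_one_iff_commute.mpr ((piH_piK_commute e b a).symm), mul_one]

lemma comm_piK_right (hc : ∀ g h : G, ⁅g, h⁆ ∈ Subgroup.center G) (e : G ≃* H × K) (a b : G) :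
    ⁅a, piK e b⁆ = ⁅piK e a, piK e b⁆ := by
  conv_lhs => rw [← piH_mul_piK e a]
  rw [comm_mul_left' hc,
    commutatorElement_eq_one_iff_commute.mpr (piH_piK_commute e a b), one_mul]

lemma comm_central_left {G : Type*} [Group G] {z : G} (hz : z ∈ Subgroup.center G) (h : G) :
    ⁅z, h⁆ = 1 :=
  commutatorElement_eq_one_iff_commute.mpr ((Subgroup.mem_center_iff.mp hz h).symm)

lemma comm_central_right {G : Type*} [Group G] {z : G} (hz : z ∈ Subgroup.center G) (h : G) :
    ⁅h, z⁆ = 1 :=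
  commutatorElement_eq_one_iff_commute.mpr (Subgroup.mem_center_iff.mp hz h)

end CommHelp


lemma exists_scalars {G H K : Type*} [Group G] [Group H] [Group K]
    (hc : ∀ g h : G, ⁅g, h⁆ ∈ Subgroup.center G)
    (hTF : ∀ g : G, g ≠ 1 → ¬IsOfFinOrder g)
    (e : G ≃* H × K)
    (hH : ∃ h₁ h₂ : H, h₁ * h₂ ≠ h₂ * h₁)
    (hK : ∃ k₁ k₂ : K, k₁ * k₂ ≠ k₂ * k₁) :
    Nonempty (RingOfScalarsOn (ℤ × ℤ) G) := by
  classical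
  -- commutator is central
  have hcomm_le : commutator G ≤ Subgroup.center G := by
    rw [commutator_def]
    exact Subgroup.commutator_le.mpr fun g _ h _ => hc g h
  -- commutative group structures
  letI : CommGroup (G ⧸ Subgroup.center G) :=
    { (inferInstance : Group (G ⧸ Subgroup.center G)) with
      mul_comm := fun x y => by
        induction x using QuotientGroup.induction_on with
        | H g =>
        induction y using QuotientGroup.induction_on with
        | H h =>
        show QuotientGroup.mk (g * h) = QuotientGroup.mk (h * g)
        refine QuotientGroup.eq.mpr ?_
        have : (g * h)⁻¹ * (h * g) = ⁅h⁻¹, g⁻¹⁆ := by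
          simp only [commutatorElement_def]; group
        rw [this]; exact hc _ _ }
  letI : CommGroup ↥(commutator G) :=
    { (inferInstance : Group ↥(commutator G)) with
      mul_comm := fun a b => Subtype.ext
        ((Subgroup.mem_center_iff.mp (hcomm_le a.2) (b : G)).symm) }
  -- quotient endomorphisms
  let πQ : (G ⧸ Subgroup.center G) →* (G ⧸ Subgroup.center G) :=
    QuotientGroup.map _ _ (piH e) (fun g hg => piH_center e hg)
  let ρQ : (G ⧸ Subgroup.center G) →* (G ⧸ Subgroup.center G) :=
    QuotientGroup.map _ _ (piK e) (fun g hg => piK_center e hg)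
  have πQ_mk : ∀ g : G, πQ (QuotientGroup.mk g) = QuotientGroup.mk (piH e g) :=
    fun g => rfl
  have ρQ_mk : ∀ g : G, ρQ (QuotientGroup.mk g) = QuotientGroup.mk (piK e g) :=
    fun g => rfl
  have πQ_mul_ρQ : ∀ x, πQ x * ρQ x = x := by
    intro x
    induction x using QuotientGroup.induction_on with
    | H g => rw [πQ_mk, ρQ_mk, ← QuotientGroup.mk_mul, piH_mul_piK]
  have πQ_πQ : ∀ x, πQ (πQ x) = πQ x := by
    intro x
    induction x using QuotientGroup.induction_on with
    | H g => rw [πQ_mk, πQ_mk, piH_piH]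
  have ρQ_ρQ : ∀ x, ρQ (ρQ x) = ρQ x := by
    intro x
    induction x using QuotientGroup.induction_on with
    | H g => rw [ρQ_mk, ρQ_mk, piK_piK]
  have πQ_ρQ : ∀ x, πQ (ρQ x) = 1 := by
    intro x
    induction x using QuotientGroup.induction_on with
    | H g => rw [ρQ_mk, πQ_mk, piH_piK']; rfl
  have ρQ_πQ : ∀ x, ρQ (πQ x) = 1 := by
    intro x
    induction x using QuotientGroup.induction_on with
    | H g => rw [πQ_mk, ρQ_mk, piK_piH']; rfl
  -- subgroup endomorphisms
  let πN : ↥(commutator G) →* ↥(commutator G) :=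
    ((piH e).domRestrict (commutator G)).codRestrict (commutator G)
      (fun w => hom_commutator_mem' (piH e) w.2)
  let ρN : ↥(commutator G) →* ↥(commutator G) :=
    ((piK e).domRestrict (commutator G)).codRestrict (commutator G)
      (fun w => hom_commutator_mem' (piK e) w.2)
  have πN_coe : ∀ w : ↥(commutator G), (πN w : G) = piH e (w : G) := fun w => rfl
  have ρN_coe : ∀ w : ↥(commutator G), (ρN w : G) = piK e (w : G) := fun w => rfl
  have πN_mul_ρN : ∀ w, πN w * ρN w = w := fun w =>
    Subtype.ext (by rw [Subgroup.coe_mul, πN_coe, ρN_coe, piH_mul_piK])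
  have πN_πN : ∀ w, πN (πN w) = πN w := fun w =>
    Subtype.ext (by simp only [πN_coe]; exact piH_piH e _)
  have ρN_ρN : ∀ w, ρN (ρN w) = ρN w := fun w =>
    Subtype.ext (by simp only [ρN_coe]; exact piK_piK e _)
  have πN_ρN : ∀ w, πN (ρN w) = 1 := fun w =>
    Subtype.ext (by simp only [πN_coe, ρN_coe, OneMemClass.coe_one]; exact piH_piK' e _)
  have ρN_πN : ∀ w, ρN (πN w) = 1 := fun w =>
    Subtype.ext (by simp only [ρN_coe, πN_coe, OneMemClass.coe_one]; exact piK_piH' e _)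
  -- witnesses of non-commutativity
  obtain ⟨h₁, h₂, hhne⟩ := hH
  obtain ⟨k₁, k₂, hkne⟩ := hK
  set gH : G := e.symm (h₁, 1) with hgH
  set gH' : G := e.symm (h₂, 1) with hgH'
  set gK : G := e.symm (1, k₁) with hgK
  set gK' : G := e.symm (1, k₂) with hgK'
  have piH_gH : piH e gH = gH := by rw [piH_apply, hgH, e.apply_symm_apply]
  have piH_gH' : piH e gH' = gH' := by rw [piH_apply, hgH', e.apply_symm_apply]
  have piK_gH : piK e gH = 1 := by
    rw [piK_apply, hgH, e.apply_symm_apply]; simpa using e.symm.map_one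
  have piK_gK : piK e gK = gK := by rw [piK_apply, hgK, e.apply_symm_apply]
  have piK_gK' : piK e gK' = gK' := by rw [piK_apply, hgK', e.apply_symm_apply]
  have piH_gK : piH e gK = 1 := by
    rw [piH_apply, hgK, e.apply_symm_apply]; simpa using e.symm.map_one
  have hcH : ⁅gH, gH'⁆ ≠ 1 := by
    intro hz
    apply hhne
    have hcm : gH * gH' = gH' * gH := commutatorElement_eq_one_iff_commute.mp hz
    have := congrArg e hcm
    rw [map_mul, map_mul, hgH, hgH', e.apply_symm_apply, e.apply_symm_apply] at this
    simpa [Prod.ext_iff] using this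
  have hcK : ⁅gK, gK'⁆ ≠ 1 := by
    intro hz
    apply hkne
    have hcm : gK * gK' = gK' * gK := commutatorElement_eq_one_iff_commute.mp hz
    have := congrArg e hcm
    rw [map_mul, map_mul, hgK, hgK', e.apply_symm_apply, e.apply_symm_apply] at this
    simpa [Prod.ext_iff] using this
  -- the construction
  refine ⟨{
    actQ := fun r x => πQ x ^ r.1 * ρQ x ^ r.2
    actN := fun r w => πN w ^ r.1 * ρN w ^ r.2
    actQ_map_mul := fun r x y => by
      show πQ (x * y) ^ r.1 * ρQ (x * y) ^ r.2 = _
      rw [map_mul, map_mul, mul_zpow, mul_zpow, mul_mul_mul_comm]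
    actN_map_mul := fun r x y => by
      show πN (x * y) ^ r.1 * ρN (x * y) ^ r.2 = _
      rw [map_mul, map_mul, mul_zpow, mul_zpow, mul_mul_mul_comm]
    actQ_one := fun x => by
      show πQ x ^ (1 : ℤ) * ρQ x ^ (1 : ℤ) = x
      rw [zpow_one, zpow_one, πQ_mul_ρQ]
    actN_one := fun w => by
      show πN w ^ (1 : ℤ) * ρN w ^ (1 : ℤ) = w
      rw [zpow_one, zpow_one, πN_mul_ρN]
    actQ_add := fun r s x => by
      show πQ x ^ (r.1 + s.1) * ρQ x ^ (r.2 + s.2) = _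
      rw [zpow_add, zpow_add, mul_mul_mul_comm]
    actN_add := fun r s x => by
      show πN x ^ (r.1 + s.1) * ρN x ^ (r.2 + s.2) = _
      rw [zpow_add, zpow_add, mul_mul_mul_comm]
    actQ_mul := fun r s x => by
      show πQ x ^ (r.1 * s.1) * ρQ x ^ (r.2 * s.2)
        = πQ (πQ x ^ s.1 * ρQ x ^ s.2) ^ r.1 * ρQ (πQ x ^ s.1 * ρQ x ^ s.2) ^ r.2
      rw [map_mul, map_mul, map_zpow, map_zpow, map_zpow, map_zpow,
        πQ_πQ, πQ_ρQ, ρQ_πQ, ρQ_ρQ, one_zpow, one_zpow, mul_one, one_mul,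
        ← zpow_mul, ← zpow_mul, mul_comm s.1 r.1, mul_comm s.2 r.2]
    actN_mul := fun r s x => by
      show πN x ^ (r.1 * s.1) * ρN x ^ (r.2 * s.2)
        = πN (πN x ^ s.1 * ρN x ^ s.2) ^ r.1 * ρN (πN x ^ s.1 * ρN x ^ s.2) ^ r.2
      rw [map_mul, map_mul, map_zpow, map_zpow, map_zpow, map_zpow,
        πN_πN, πN_ρN, ρN_πN, ρN_ρN, one_zpow, one_zpow, mul_one, one_mul,
        ← zpow_mul, ← zpow_mul, mul_comm s.1 r.1, mul_comm s.2 r.2]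
    actQ_faithful := fun r s hrs => by
      have h1 : r.1 = s.1 := by
        have h := hrs (QuotientGroup.mk gH)
        simp only [πQ_mk, ρQ_mk, piH_gH, piK_gH, QuotientGroup.mk_one, one_zpow, mul_one] at h
        have hmem : gH ^ (-r.1 + s.1) ∈ Subgroup.center G := by
          rw [zpow_add, zpow_neg]
          refine QuotientGroup.eq.mp ?_
          rw [QuotientGroup.mk_zpow, QuotientGroup.mk_zpow]
          exact h
        have := central_zpow_imp_zero' hc hTF hcH hmem
        omega
      have h2 : r.2 = s.2 := by
        have h := hrs (QuotientGroup.mk gK)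
        simp only [πQ_mk, ρQ_mk, piH_gK, piK_gK, QuotientGroup.mk_one, one_zpow, one_mul] at h
        have hmem : gK ^ (-r.2 + s.2) ∈ Subgroup.center G := by
          rw [zpow_add, zpow_neg]
          refine QuotientGroup.eq.mp ?_
          rw [QuotientGroup.mk_zpow, QuotientGroup.mk_zpow]
          exact h
        have := central_zpow_imp_zero' hc hTF hcK hmem
        omega
      exact Prod.ext h1 h2
    actN_faithful := fun r s hrs => by
      have h1 : r.1 = s.1 := by
        have h := hrs ⟨⁅gH, gH'⁆, mem_commutator_self gH gH'⟩
        have e1 : πN ⟨⁅gH, gH'⁆, mem_commutator_self gH gH'⟩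
            = ⟨⁅gH, gH'⁆, mem_commutator_self gH gH'⟩ := by
          apply Subtype.ext
          rw [πN_coe, map_commutatorElement, piH_gH, piH_gH']
        have e2 : ρN ⟨⁅gH, gH'⁆, mem_commutator_self gH gH'⟩ = 1 := by
          apply Subtype.ext
          rw [ρN_coe, map_commutatorElement, piK_gH, commutatorElement_one_left,
            OneMemClass.coe_one]
        simp only [e1, e2, one_zpow, mul_one] at h
        have h' := congrArg (Subtype.val) h
        simp only [SubgroupClass.coe_zpow] at h'
        exact tf_zpow_eq' hTF hcH h'
      have h2 : r.2 = s.2 := by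
        have h := hrs ⟨⁅gK, gK'⁆, mem_commutator_self gK gK'⟩
        have e1 : πN ⟨⁅gK, gK'⁆, mem_commutator_self gK gK'⟩ = 1 := by
          apply Subtype.ext
          rw [πN_coe, map_commutatorElement, piH_gK, commutatorElement_one_left,
            OneMemClass.coe_one]
        have e2 : ρN ⟨⁅gK, gK'⁆, mem_commutator_self gK gK'⟩
            = ⟨⁅gK, gK'⁆, mem_commutator_self gK gK'⟩ := by
          apply Subtype.ext
          rw [ρN_coe, map_commutatorElement, piK_gK, piK_gK']
        simp only [e1, e2, one_zpow, one_mul] at h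
        have h' := congrArg (Subtype.val) h
        simp only [SubgroupClass.coe_zpow] at h'
        exact tf_zpow_eq' hTF hcK h'
      exact Prod.ext h1 h2
    compat_left := fun r g h g' hyp => by
      have hyp' : (QuotientGroup.mk g' : G ⧸ Subgroup.center G)
          = QuotientGroup.mk (piH e g ^ r.1 * piK e g ^ r.2) := by
        rw [hyp]
        simp only [πQ_mk, ρQ_mk, QuotientGroup.mk_mul, QuotientGroup.mk_zpow]
      have hzmem : g'⁻¹ * (piH e g ^ r.1 * piK e g ^ r.2) ∈ Subgroup.center G :=
        QuotientGroup.eq.mp hyp'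
      have hg' : g' = piH e g ^ r.1 * piK e g ^ r.2
          * (g'⁻¹ * (piH e g ^ r.1 * piK e g ^ r.2))⁻¹ := by group
      apply Subtype.ext
      show ((πN ⟨⁅g, h⁆, mem_commutator_self g h⟩ ^ r.1
          * ρN ⟨⁅g, h⁆, mem_commutator_self g h⟩ ^ r.2 : ↥(commutator G)) : G) = ⁅g', h⁆
      rw [Subgroup.coe_mul, SubgroupClass.coe_zpow, SubgroupClass.coe_zpow, πN_coe, ρN_coe]
      simp only [map_commutatorElement]
      conv_rhs => rw [hg']
      rw [comm_mul_left' hc, comm_central_left ((Subgroup.center G).inv_mem hzmem), mul_one,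
        comm_mul_left' hc, comm_zpow_left' hc, comm_zpow_left' hc,
        comm_piH_left hc e g h, comm_piK_left hc e g h]
    compat_right := fun r g h h' hyp => by
      have hyp' : (QuotientGroup.mk h' : G ⧸ Subgroup.center G)
          = QuotientGroup.mk (piH e h ^ r.1 * piK e h ^ r.2) := by
        rw [hyp]
        simp only [πQ_mk, ρQ_mk, QuotientGroup.mk_mul, QuotientGroup.mk_zpow]
      have hzmem : h'⁻¹ * (piH e h ^ r.1 * piK e h ^ r.2) ∈ Subgroup.center G :=
        QuotientGroup.eq.mp hyp'
      have hh' : h' = piH e h ^ r.1 * piK e h ^ r.2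
          * (h'⁻¹ * (piH e h ^ r.1 * piK e h ^ r.2))⁻¹ := by group
      apply Subtype.ext
      show ((πN ⟨⁅g, h⁆, mem_commutator_self g h⟩ ^ r.1
          * ρN ⟨⁅g, h⁆, mem_commutator_self g h⟩ ^ r.2 : ↥(commutator G)) : G) = ⁅g, h'⁆
      rw [Subgroup.coe_mul, SubgroupClass.coe_zpow, SubgroupClass.coe_zpow, πN_coe, ρN_coe]
      simp only [map_commutatorElement]
      conv_rhs => rw [hh']
      rw [comm_mul_right' hc, comm_central_right ((Subgroup.center G).inv_mem hzmem), mul_one,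
        comm_mul_right' hc, comm_zpow_right' hc, comm_zpow_right' hc,
        comm_piH_right hc e g h, comm_piK_right hc e g h] }⟩

/-- If G is a non-abelian τ₂-group every ring of scalars of which is
isomorphic to ℤ, then G is not isomorphic to a direct product H × K of two non-abelian
groups. -/
theorem stmt11 (G : Type) [Group G] (hT : IsTau2 G)
    (hna : ∃ g h : G, g * h ≠ h * g)
    (hsc : ∀ (R : Type) [CommRing R], RingOfScalarsOn R G → Nonempty (R ≃+* ℤ)) :
    ∀ (H K : Type) [Group H] [Group K],
      (∃ h₁ h₂ : H, h₁ * h₂ ≠ h₂ * h₁) → (∃ k₁ k₂ : K, k₁ * k₂ ≠ k₂ * k₁) →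
      IsEmpty (G ≃* H × K) := by
  intro H K _ _ hH hK
  constructor
  intro e
  obtain ⟨-, hTF, hc⟩ := hT
  obtain ⟨S⟩ := exists_scalars hc hTF e hH hK
  obtain ⟨φ⟩ := hsc (ℤ × ℤ) S
  have hmul : ((1, 0) : ℤ × ℤ) * (0, 1) = 0 := by
    ext <;> simp
  have h10 : φ (1, 0) * φ (0, 1) = 0 := by
    rw [← map_mul, hmul, map_zero]
  rcases mul_eq_zero.mp h10 with hcase | hcase
  · have h0 : ((1, 0) : ℤ × ℤ) = 0 := φ.injective (by rw [hcase, map_zero])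
    exact one_ne_zero (Prod.ext_iff.mp h0).1
  · have h0 : ((0, 1) : ℤ × ℤ) = 0 := φ.injective (by rw [hcase, map_zero])
    exact one_ne_zero (Prod.ext_iff.mp h0).2
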